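/- Let S be a charge-conserving matrix in Matrix (Fin 2 × Fin 2) (Fin 2 × Fin 2) ℂ satisfying S * S = 1 and the braid relation S₁ * S₂ * S₁ = S₂ * S₁ * S₂. Then either S = 1, or S = -1, or else S (2,1) (2,1) = 0, S (1,2) (1,2) = 0, S (1,1) (1,1) ^ 2 = 1, S (2,2) (2,2) ^ 2 = 1 and S (1,2) (2,1) * S (2,1) (1,2) = 1. -/
import Mathlib


open Matrix

noncomputable section

/-- The width-3 matrix `M₁ = M ⊗ 1`. -/
def Lone {N : ℕ} (M : Matrix (Fin N × Fin N) (Fin N × Fin N) ℂ) :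
    Matrix (Fin N × Fin N × Fin N) (Fin N × Fin N × Fin N) ℂ :=
  Matrix.of fun p q =>
    M (p.1, p.2.1) (q.1, q.2.1) * (if p.2.2 = q.2.2 then (1 : ℂ) else 0)

/-- The width-3 matrix `M₂ = 1 ⊗ M`. -/
def Ltwo {N : ℕ} (M : Matrix (Fin N × Fin N) (Fin N × Fin N) ℂ) :
    Matrix (Fin N × Fin N × Fin N) (Fin N × Fin N × Fin N) ℂ :=
  Matrix.of fun p q =>
    (if p.1 = q.1 then (1 : ℂ) else 0) * M (p.2.1, p.2.2) (q.2.1, q.2.2)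

/-- The pair (S,R) satisfies the loop braid relations. -/
def LoopBraid {N : ℕ} (S R : Matrix (Fin N × Fin N) (Fin N × Fin N) ℂ) : Prop :=
  S * S = 1 ∧
  Lone S * Ltwo S * Lone S = Ltwo S * Lone S * Ltwo S ∧
  Lone R * Ltwo R * Lone R = Ltwo R * Lone R * Ltwo R ∧
  Lone R * Ltwo R * Lone S = Ltwo S * Lone R * Ltwo R ∧
  Lone R * Ltwo S * Lone S = Ltwo S * Lone S * Ltwo R

/-- A width-2 rank-N matrix is charge-conserving. -/
def ChargeConserving {N : ℕ} (M : Matrix (Fin N × Fin N) (Fin N × Fin N) ℂ) : Prop :=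
  ∀ k l i j : Fin N, M (k, l) (i, j) ≠ 0 → ((k, l) = (i, j) ∨ (k, l) = (j, i))

/-- The element of `Fin 2` labelled `1`. -/
def e1 : Fin 2 := 0
/-- The element of `Fin 2` labelled `2`. -/
def e2 : Fin 2 := 1

theorem stmt4 (S : Matrix (Fin 2 × Fin 2) (Fin 2 × Fin 2) ℂ)
    (hcc : ChargeConserving S)
    (hinv : S * S = 1)
    (hbraid : Lone S * Ltwo S * Lone S = Ltwo S * Lone S * Ltwo S) :
    S = 1 ∨ S = -1 ∨
      (S (e2, e1) (e2, e1) = 0 ∧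
       S (e1, e2) (e1, e2) = 0 ∧
       S (e1, e1) (e1, e1) ^ 2 = 1 ∧
       S (e2, e2) (e2, e2) ^ 2 = 1 ∧
       S (e1, e2) (e2, e1) * S (e2, e1) (e1, e2) = 1) := by
  have hz : ∀ k l i j : Fin 2, (k, l) ≠ (i, j) → (k, l) ≠ (j, i) → S (k, l) (i, j) = 0 := by
    intro k l i j h1 h2
    by_contra hne
    rcases hcc k l i j hne with h | h
    exacts [h1 h, h2 h]
  have z1 : S (0,0) (0,1) = 0 := hz _ _ _ _ (by decide) (by decide)
  have z2 : S (0,0) (1,0) = 0 := hz _ _ _ _ (by decide) (by decide)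
  have z3 : S (0,0) (1,1) = 0 := hz _ _ _ _ (by decide) (by decide)
  have z4 : S (1,1) (0,1) = 0 := hz _ _ _ _ (by decide) (by decide)
  have z5 : S (1,1) (1,0) = 0 := hz _ _ _ _ (by decide) (by decide)
  have z6 : S (1,1) (0,0) = 0 := hz _ _ _ _ (by decide) (by decide)
  have z7 : S (0,1) (0,0) = 0 := hz _ _ _ _ (by decide) (by decide)
  have z8 : S (0,1) (1,1) = 0 := hz _ _ _ _ (by decide) (by decide)
  have z9 : S (1,0) (0,0) = 0 := hz _ _ _ _ (by decide) (by decide)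
  have z10 : S (1,0) (1,1) = 0 := hz _ _ _ _ (by decide) (by decide)
  set a := S (0,0) (0,0) with ha
  set b := S (0,1) (0,1) with hb
  set c := S (1,0) (1,0) with hc
  set d := S (1,1) (1,1) with hd
  set x := S (0,1) (1,0) with hx
  set y := S (1,0) (0,1) with hy
  -- equations from S*S = 1
  have I := fun p q => congrFun (congrFun hinv p) q
  have i1 := I (0,0) (0,0)
  have i2 := I (1,1) (1,1)
  have i3 := I (0,1) (0,1)
  have i4 := I (1,0) (1,0)
  have i5 := I (0,1) (1,0)
  have i6 := I (1,0) (0,1)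
  simp only [Matrix.mul_apply, Fintype.sum_prod_type, Fin.sum_univ_two,
    Matrix.one_apply, z1, z2, z3, z4, z5, z6, z7, z8, z9, z10,
    ← ha, ← hb, ← hc, ← hd, ← hx, ← hy, if_true, if_false,
    mul_zero, zero_mul, add_zero, zero_add, Prod.mk.injEq] at i1 i2 i3 i4 i5 i6
  norm_num at i1 i2 i3 i4 i5 i6
  -- equations from braid
  have B := fun p q => congrFun (congrFun hbraid p) q
  have b1 := B (0,0,1) (0,0,1)
  have b2 := B (0,1,0) (0,1,0)
  have b3 := B (0,1,1) (0,1,1)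
  simp only [Lone, Ltwo, Matrix.mul_apply, Matrix.of_apply, Fintype.sum_prod_type,
    Fin.sum_univ_two, z1, z2, z3, z4, z5, z6, z7, z8, z9, z10,
    ← ha, ← hb, ← hc, ← hd, ← hx, ← hy, Prod.mk.injEq] at b1 b2 b3
  norm_num at b1 b2 b3
  simp only [e1, e2]
  -- now pure algebra
  by_cases hb0 : b = 0
  · by_cases hc0 : c = 0
    · right; right
      refine ⟨hc0, hb0, ?_, ?_, ?_⟩
      · rw [sq]; exact i1
      · rw [sq]; exact i2
      · linear_combination i3 - b * hb0
    · exfalso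
      apply hc0
      have hcc2 : c * c = b * b := by linear_combination i4 - i3
      rw [hb0, mul_zero] at hcc2
      exact mul_self_eq_zero.mp hcc2
  · -- b ≠ 0 : show S = ±1
    have hcb : c = b := by
      by_cases hc0 : c = 0
      · exfalso; apply hb0
        have hcc2 : c * c = b * b := by linear_combination i4 - i3
        rw [hc0, mul_zero] at hcc2
        exact mul_self_eq_zero.mp hcc2.symm
      · have h3 : b * c * (b - c) = 0 := by linear_combination b2
        rcases mul_eq_zero.mp h3 with h | h
        · exact absurd (mul_eq_zero.mp h) (by push_neg; exact ⟨hb0, hc0⟩)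
        · exact (sub_eq_zero.mp h).symm
    have hx0 : x = 0 := by
      have h2 : (2 : ℂ) * b * x = 0 := by linear_combination i5 - x * hcb
      rcases mul_eq_zero.mp h2 with h | h
      · exact absurd (mul_eq_zero.mp h) (by push_neg; exact ⟨two_ne_zero, hb0⟩)
      · exact h
    have hy0 : y = 0 := by
      have h2 : (2 : ℂ) * b * y = 0 := by linear_combination i6 - y * hcb
      rcases mul_eq_zero.mp h2 with h | h
      · exact absurd (mul_eq_zero.mp h) (by push_neg; exact ⟨two_ne_zero, hb0⟩)
      · exact h
    have hb1 : b * b = 1 := by linear_combination i3 - y * hx0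
    have ha0 : a ≠ 0 := by
      intro h; rw [h, zero_mul] at i1; exact zero_ne_one i1
    have hd0 : d ≠ 0 := by
      intro h; rw [h, zero_mul] at i2; exact zero_ne_one i2
    have hab : a = b := by
      have h : a * b * (a - b) = 0 := by linear_combination b1 + b * y * hx0
      rcases mul_eq_zero.mp h with h | h
      · exact absurd (mul_eq_zero.mp h) (by push_neg; exact ⟨ha0, hb0⟩)
      · exact sub_eq_zero.mp h
    have hdb : d = b := by
      have h : d * b * (d - b) = 0 := by linear_combination b * y * hx0 - b3
      rcases mul_eq_zero.mp h with h | h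
      · exact absurd (mul_eq_zero.mp h) (by push_neg; exact ⟨hd0, hb0⟩)
      · exact sub_eq_zero.mp h
    have ex : S (0, 1) (1, 0) = 0 := by rw [← hx]; exact hx0
    have ey : S (1, 0) (0, 1) = 0 := by rw [← hy]; exact hy0
    rcases mul_self_eq_one_iff.mp hb1 with h1 | h1
    · left
      have v1 : S (0, 0) (0, 0) = 1 := by rw [← ha, hab, h1]
      have v2 : S (0, 1) (0, 1) = 1 := by rw [← hb, h1]
      have v3 : S (1, 0) (1, 0) = 1 := by rw [← hc, hcb, h1]
      have v4 : S (1, 1) (1, 1) = 1 := by rw [← hd, hdb, h1]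
      ext ⟨k, l⟩ ⟨i, j⟩
      fin_cases k <;> fin_cases l <;> fin_cases i <;> fin_cases j <;>
        simp [Matrix.one_apply, z1, z2, z3, z4, z5, z6, z7, z8, z9, z10,
          ex, ey, v1, v2, v3, v4, -Prod.mk_zero_zero, -Prod.mk_one_one]
    · right; left
      have v1 : S (0, 0) (0, 0) = -1 := by rw [← ha, hab, h1]
      have v2 : S (0, 1) (0, 1) = -1 := by rw [← hb, h1]
      have v3 : S (1, 0) (1, 0) = -1 := by rw [← hc, hcb, h1]
      have v4 : S (1, 1) (1, 1) = -1 := by rw [← hd, hdb, h1]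
      ext ⟨k, l⟩ ⟨i, j⟩
      fin_cases k <;> fin_cases l <;> fin_cases i <;> fin_cases j <;>
        simp [Matrix.one_apply, z1, z2, z3, z4, z5, z6, z7, z8, z9, z10,
          ex, ey, v1, v2, v3, v4, -Prod.mk_zero_zero, -Prod.mk_one_one]
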